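/- Let X ∈ ℝ^{n×d}, y ∈ ℝⁿ, β > 0, and let ℓ(·, y) : ℝⁿ → ℝ be convex. Let (v_i*, w_i*)_{i=1}^P be an optimal solution of the convex program inf over (v_i, w_i)_{i=1}^P of ℓ(∑_{i=1}^P D_i X (v_i − w_i), y) + β ∑_{i=1}^P (‖v_i‖₂ + ‖w_i‖₂) subject to (2D_i − I_n) X v_i ≥ 0 and (2D_i − I_n) X w_i ≥ 0 for all i ∈ [P], and let m* = |{i : v_i* ≠ 0}| + |{i : w_i* ≠ 0}|. Define network weights: for each i with v_i* ≠ 0, a neuron (u, α) = (v_i*/√‖v_i*‖₂, √‖v_i*‖₂); for each i with w_i* ≠ 0, a neuron (u, α) = (w_i*/√‖w_i*‖₂, −√‖w_i*‖₂); all remaining neurons zero. Then for any width m ≥ m*, these weights (u_j*, α_j*)_{j=1}^m are a global minimizer of the nonconvex training problem inf over (u_j, α_j)_{j=1}^m of ℓ(∑_{j=1}^m (X u_j)_+ α_j, y) + (β/2) ∑_{j=1}^m (‖u_j‖₂² + α_j²). -/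

import Mathlib

open Matrix

noncomputable section

/-! ### Auxiliary definitions and lemmas -/

/-- Euclidean norm as sqrt of sum of squares. -/
def eN {d : ℕ} (v : Fin d → ℝ) : ℝ := Real.sqrt (∑ h, (v h) ^ 2)

lemma eN_eq_norm {d : ℕ} (v : Fin d → ℝ) :
    eN v = ‖(WithLp.equiv 2 (Fin d → ℝ)).symm v‖ := by
  rw [EuclideanSpace.norm_eq, eN]
  congr 1; apply Finset.sum_congr rfl; intro h _
  rw [Real.norm_eq_abs, sq_abs]; rfl

lemma eN_nonneg {d : ℕ} (v : Fin d → ℝ) : 0 ≤ eN v := Real.sqrt_nonneg _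

lemma eN_sq {d : ℕ} (v : Fin d → ℝ) : eN v ^ 2 = ∑ h, (v h) ^ 2 :=
  Real.sq_sqrt (Finset.sum_nonneg fun _ _ => sq_nonneg _)

lemma eN_smul {d : ℕ} (c : ℝ) (v : Fin d → ℝ) : eN (c • v) = |c| * eN v := by
  rw [eN_eq_norm, eN_eq_norm]
  have : (WithLp.equiv 2 (Fin d → ℝ)).symm (c • v) = c • (WithLp.equiv 2 (Fin d → ℝ)).symm v := rfl
  rw [this, norm_smul, Real.norm_eq_abs]

lemma eN_sum_le {d : ℕ} {ι : Type*} (s : Finset ι) (f : ι → Fin d → ℝ) :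
    eN (∑ j ∈ s, f j) ≤ ∑ j ∈ s, eN (f j) := by
  simp only [eN_eq_norm]
  have : (WithLp.equiv 2 (Fin d → ℝ)).symm (∑ j ∈ s, f j)
      = ∑ j ∈ s, (WithLp.equiv 2 (Fin d → ℝ)).symm (f j) := WithLp.toLp_sum (p := 2) (s := s) (f := f)
  rw [this]; exact norm_sum_le _ _

lemma eN_zero {d : ℕ} : eN (0 : Fin d → ℝ) = 0 := by simp [eN]

/-- indicator diagonal picks out the positive part. -/
lemma ind_mulVec {n : ℕ} (z : Fin n → ℝ) (k : Fin n) :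
    (Matrix.diagonal (fun k => if 0 ≤ z k then (1:ℝ) else 0) *ᵥ z) k = max (z k) 0 := by
  rw [Matrix.mulVec_diagonal]
  by_cases h : 0 ≤ z k
  · simp [h, max_eq_left h]
  · simp [h, max_eq_right (le_of_not_ge h)]

/-- feasibility implies `D *ᵥ z` is the positive part of `z`. -/
lemma feas_mulVec {n : ℕ} (q : Fin n → ℝ) (z : Fin n → ℝ)
    (hfe : ∀ k, 0 ≤ (((2:ℝ) • Matrix.diagonal q - 1) *ᵥ z) k)
    (hq : ∀ k, q k = 0 ∨ q k = 1) (k : Fin n) :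
    (Matrix.diagonal q *ᵥ z) k = max (z k) 0 := by
  have h := hfe k
  rw [Matrix.sub_mulVec, Matrix.smul_mulVec, Matrix.one_mulVec] at h
  simp only [Pi.sub_apply, Pi.smul_apply, Matrix.mulVec_diagonal, smul_eq_mul] at h
  rw [Matrix.mulVec_diagonal]
  rcases hq k with h0 | h1
  · rw [h0] at h ⊢
    simp only [mul_zero, zero_mul, zero_sub, neg_nonneg] at h ⊢
    rw [max_eq_right h]
  · rw [h1] at h ⊢
    rw [one_mul] at h ⊢
    rw [two_mul, add_sub_cancel_right] at h
    rw [max_eq_left h]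

lemma sum_split {m : ℕ} {A B : Type*} [Fintype A] [Fintype B] (j₁ : A → Fin m) (j₂ : B → Fin m)
    (h1 : Function.Injective j₁) (h2 : Function.Injective j₂) (hd : ∀ a b, j₁ a ≠ j₂ b)
    (F : Fin m → ℝ) (h0 : ∀ j, (∀ a, j₁ a ≠ j) → (∀ b, j₂ b ≠ j) → F j = 0) :
    ∑ j, F j = ∑ a, F (j₁ a) + ∑ b, F (j₂ b) := by
  classical
  have hsub : ∑ j ∈ (Finset.univ.image j₁ ∪ Finset.univ.image j₂), F j = ∑ j, F j := by
    apply Finset.sum_subset (Finset.subset_univ _)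
    intro j _ hj
    simp only [Finset.mem_union, Finset.mem_image, Finset.mem_univ, true_and, not_or,
      not_exists] at hj
    exact h0 j hj.1 hj.2
  have hdis : Disjoint (Finset.univ.image j₁) (Finset.univ.image j₂) := by
    rw [Finset.disjoint_left]
    rintro x hx hy
    simp only [Finset.mem_image, Finset.mem_univ, true_and] at hx hy
    obtain ⟨a, ha⟩ := hx; obtain ⟨b, hb⟩ := hy
    exact hd a b (ha.trans hb.symm)
  rw [← hsub, Finset.sum_union hdis,
    Finset.sum_image (fun a _ b _ h => h1 h), Finset.sum_image (fun a _ b _ h => h2 h)]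

lemma sum_subtype_eq {P : ℕ} (p : Fin P → Prop) [DecidablePred p] (G : Fin P → ℝ)
    (h0 : ∀ i, ¬ p i → G i = 0) : ∑ a : {i // p i}, G a.1 = ∑ i, G i := by
  classical
  rw [← Finset.sum_subtype (Finset.univ.filter p) (fun x => by simp) G]
  exact Finset.sum_filter_of_ne (fun x _ hx => by by_contra h; exact hx (h0 x h))

lemma sumsq_pos {d : ℕ} (v : Fin d → ℝ) (hv : v ≠ 0) : 0 < ∑ h, (v h) ^ 2 := by
  obtain ⟨h0, hh0⟩ := Function.ne_iff.mp hv
  exact Finset.sum_pos' (fun _ _ => sq_nonneg _)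
    ⟨h0, Finset.mem_univ _, lt_of_le_of_ne (sq_nonneg _) (Ne.symm (pow_ne_zero 2 hh0))⟩

lemma neuron_pred {n d : ℕ} (X : Matrix (Fin n) (Fin d) ℝ) (v : Fin d → ℝ) (hv : v ≠ 0)
    (k : Fin n) :
    max ((X *ᵥ fun h => v h / Real.sqrt (Real.sqrt (∑ h', (v h') ^ 2))) k) 0 *
      Real.sqrt (Real.sqrt (∑ h', (v h') ^ 2)) = max ((X *ᵥ v) k) 0 := by
  set c := Real.sqrt (Real.sqrt (∑ h', (v h') ^ 2)) with hc
  have hcpos : 0 < c := Real.sqrt_pos.mpr (Real.sqrt_pos.mpr (sumsq_pos v hv))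
  have h1 : (fun h => v h / c) = c⁻¹ • v := by funext h; simp [div_eq_inv_mul]
  rw [h1, Matrix.mulVec_smul, Pi.smul_apply, smul_eq_mul,
    max_mul_of_nonneg _ _ hcpos.le, zero_mul]
  congr 1
  field_simp

lemma neuron_reg {d : ℕ} (v : Fin d → ℝ) (hv : v ≠ 0) :
    (∑ h, (v h / Real.sqrt (Real.sqrt (∑ h', (v h') ^ 2))) ^ 2) +
      (Real.sqrt (Real.sqrt (∑ h', (v h') ^ 2))) ^ 2 = 2 * eN v := by
  set t := ∑ h', (v h') ^ 2 with ht
  have htpos : 0 < t := sumsq_pos v hv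
  have hstpos : 0 < Real.sqrt t := Real.sqrt_pos.mpr htpos
  have hc2 : (Real.sqrt (Real.sqrt t)) ^ 2 = Real.sqrt t :=
    Real.sq_sqrt (Real.sqrt_nonneg t)
  have h1 : (∑ h, (v h / Real.sqrt (Real.sqrt t)) ^ 2) = Real.sqrt t := by
    simp only [div_pow, hc2]
    rw [← Finset.sum_div, ← ht, div_eq_iff hstpos.ne', Real.mul_self_sqrt htpos.le]
  rw [h1, hc2, eN, ← ht]; ring

lemma mulVec_finsum {n d : ℕ} {ι : Type*} (A : Matrix (Fin n) (Fin d) ℝ) (s : Finset ι)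
    (f : ι → Fin d → ℝ) : A *ᵥ (∑ j ∈ s, f j) = ∑ j ∈ s, A *ᵥ f j := by
  rw [← Matrix.mulVecLin_apply, map_sum]
  simp [Matrix.mulVecLin_apply]

/-- the weights recovered from a minimizer of the convex program are a global
minimizer of the nonconvex training problem, for any width `m ≥ m*`. -/
theorem statement_1 {n d P : ℕ}
    (X : Matrix (Fin n) (Fin d) ℝ) (y : Fin n → ℝ) (β : ℝ) (hβ : 0 < β)
    (ℓ : (Fin n → ℝ) → ℝ) (hℓ : ConvexOn ℝ Set.univ ℓ)
    (D : Fin P → Matrix (Fin n) (Fin n) ℝ)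
    (hDinj : Function.Injective D)
    (hDform : ∀ i, ∃ u : Fin d → ℝ,
      D i = Matrix.diagonal (fun k => if 0 ≤ (X *ᵥ u) k then (1 : ℝ) else 0))
    (hDall : ∀ u : Fin d → ℝ, ∃ i,
      D i = Matrix.diagonal (fun k => if 0 ≤ (X *ᵥ u) k then (1 : ℝ) else 0))
    (vstar wstar : Fin P → Fin d → ℝ)
    -- (vstar, wstar) is an optimal solution of the convex program:
    (hv : ∀ i, ∀ k, 0 ≤ (((2 : ℝ) • D i - 1) *ᵥ (X *ᵥ vstar i)) k)
    (hw : ∀ i, ∀ k, 0 ≤ (((2 : ℝ) • D i - 1) *ᵥ (X *ᵥ wstar i)) k)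
    (hopt : ∀ v w : Fin P → Fin d → ℝ,
      (∀ i, ∀ k, 0 ≤ (((2 : ℝ) • D i - 1) *ᵥ (X *ᵥ v i)) k) →
      (∀ i, ∀ k, 0 ≤ (((2 : ℝ) • D i - 1) *ᵥ (X *ᵥ w i)) k) →
      ℓ (∑ i, D i *ᵥ (X *ᵥ (vstar i - wstar i))) +
        β * ∑ i, (Real.sqrt (∑ h, (vstar i h) ^ 2) + Real.sqrt (∑ h, (wstar i h) ^ 2)) ≤
      ℓ (∑ i, D i *ᵥ (X *ᵥ (v i - w i))) +
        β * ∑ i, (Real.sqrt (∑ h, (v i h) ^ 2) + Real.sqrt (∑ h, (w i h) ^ 2)))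
    (mstar : ℕ)
    (hmstar : mstar = (Finset.univ.filter fun i => vstar i ≠ 0).card +
      (Finset.univ.filter fun i => wstar i ≠ 0).card) :
    ∀ m : ℕ, mstar ≤ m →
    ∀ (u : Fin m → Fin d → ℝ) (α : Fin m → ℝ),
      -- (u, α) is an arrangement of the recovered weights:
      (∃ (j₁ : {i : Fin P // vstar i ≠ 0} → Fin m) (j₂ : {i : Fin P // wstar i ≠ 0} → Fin m),
        Function.Injective j₁ ∧ Function.Injective j₂ ∧ (∀ a b, j₁ a ≠ j₂ b) ∧
        (∀ a, u (j₁ a) =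
          fun h => vstar a.1 h / Real.sqrt (Real.sqrt (∑ h', (vstar a.1 h') ^ 2))) ∧
        (∀ a, α (j₁ a) = Real.sqrt (Real.sqrt (∑ h', (vstar a.1 h') ^ 2))) ∧
        (∀ b, u (j₂ b) =
          fun h => wstar b.1 h / Real.sqrt (Real.sqrt (∑ h', (wstar b.1 h') ^ 2))) ∧
        (∀ b, α (j₂ b) = - Real.sqrt (Real.sqrt (∑ h', (wstar b.1 h') ^ 2))) ∧
        (∀ j, (∀ a, j₁ a ≠ j) → (∀ b, j₂ b ≠ j) → u j = 0 ∧ α j = 0)) →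
      -- then (u, α) is a global minimizer of the nonconvex training problem:
      ∀ (u' : Fin m → Fin d → ℝ) (α' : Fin m → ℝ),
        ℓ (fun k => ∑ j, max ((X *ᵥ u j) k) 0 * α j) +
          β / 2 * ∑ j, ((∑ h, (u j h) ^ 2) + (α j) ^ 2) ≤
        ℓ (fun k => ∑ j, max ((X *ᵥ u' j) k) 0 * α' j) +
          β / 2 * ∑ j, ((∑ h, (u' j h) ^ 2) + (α' j) ^ 2) := by
  classical
  intro m hm u α harr u' α'
  obtain ⟨j₁, j₂, hinj₁, hinj₂, hdisj, hu1, hα1, hu2, hα2, hrest⟩ := harr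
  -- a feasible direction: D i picks the positive part
  have key : ∀ (i : Fin P) (z : Fin d → ℝ),
      (∀ k, 0 ≤ (((2:ℝ) • D i - 1) *ᵥ (X *ᵥ z)) k) →
      ∀ k, (D i *ᵥ (X *ᵥ z)) k = max ((X *ᵥ z) k) 0 := by
    intro i z hz k
    obtain ⟨u₀, hu₀⟩ := hDform i
    rw [hu₀] at hz ⊢
    exact feas_mulVec _ _ hz (fun k' => by by_cases h : 0 ≤ (X *ᵥ u₀) k' <;> simp [h]) k
  -- STEP A : the nonconvex objective at (u, α) equals the convex objective at (vstar, wstar)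
  have predA : (fun k => ∑ j, max ((X *ᵥ u j) k) 0 * α j)
      = ∑ i, D i *ᵥ (X *ᵥ (vstar i - wstar i)) := by
    funext k
    have h0 : ∀ j, (∀ a, j₁ a ≠ j) → (∀ b, j₂ b ≠ j) → max ((X *ᵥ u j) k) 0 * α j = 0 := by
      intro j ha hb; rw [(hrest j ha hb).2, mul_zero]
    rw [sum_split j₁ j₂ hinj₁ hinj₂ hdisj _ h0]
    have e1 : ∀ a : {i // vstar i ≠ 0}, max ((X *ᵥ u (j₁ a)) k) 0 * α (j₁ a)
        = (D a.1 *ᵥ (X *ᵥ vstar a.1)) k := by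
      intro a
      rw [hu1 a, hα1 a, neuron_pred X (vstar a.1) a.2 k, key a.1 (vstar a.1) (hv a.1) k]
    have e2 : ∀ b : {i // wstar i ≠ 0}, max ((X *ᵥ u (j₂ b)) k) 0 * α (j₂ b)
        = -((D b.1 *ᵥ (X *ᵥ wstar b.1)) k) := by
      intro b
      rw [hu2 b, hα2 b, mul_neg, neuron_pred X (wstar b.1) b.2 k,
        key b.1 (wstar b.1) (hw b.1) k]
    simp only [e1, e2]
    rw [Finset.sum_apply]
    have hR : ∀ i : Fin P, (D i *ᵥ (X *ᵥ (vstar i - wstar i))) k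
        = (D i *ᵥ (X *ᵥ vstar i)) k - (D i *ᵥ (X *ᵥ wstar i)) k := by
      intro i
      rw [Matrix.mulVec_sub, Matrix.mulVec_sub]
      rfl
    calc (∑ a : {i // vstar i ≠ 0}, (D a.1 *ᵥ (X *ᵥ vstar a.1)) k)
          + ∑ b : {i // wstar i ≠ 0}, -((D b.1 *ᵥ (X *ᵥ wstar b.1)) k)
        = (∑ i, (D i *ᵥ (X *ᵥ vstar i)) k) - ∑ i, (D i *ᵥ (X *ᵥ wstar i)) k := by
          rw [Finset.sum_neg_distrib, ← sub_eq_add_neg]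
          congr 1
          · exact sum_subtype_eq (fun i => vstar i ≠ 0)
              (fun i => (D i *ᵥ (X *ᵥ vstar i)) k)
              (fun i hi => by
                have hi' : vstar i = 0 := not_not.mp hi
                simp [hi'])
          · exact sum_subtype_eq (fun i => wstar i ≠ 0)
              (fun i => (D i *ᵥ (X *ᵥ wstar i)) k)
              (fun i hi => by
                have hi' : wstar i = 0 := not_not.mp hi
                simp [hi'])
      _ = ∑ i, (D i *ᵥ (X *ᵥ (vstar i - wstar i))) k := by
          rw [← Finset.sum_sub_distrib]
          exact Finset.sum_congr rfl fun i _ => (hR i).symm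
  have regA : ∑ j, ((∑ h, (u j h) ^ 2) + (α j) ^ 2)
      = 2 * ∑ i, (eN (vstar i) + eN (wstar i)) := by
    have h0 : ∀ j, (∀ a, j₁ a ≠ j) → (∀ b, j₂ b ≠ j) →
        ((∑ h, (u j h) ^ 2) + (α j) ^ 2) = 0 := by
      intro j ha hb
      obtain ⟨hu0, hα0⟩ := hrest j ha hb
      simp [hu0, hα0]
    rw [sum_split j₁ j₂ hinj₁ hinj₂ hdisj _ h0]
    have e1 : ∀ a : {i // vstar i ≠ 0}, ((∑ h, (u (j₁ a) h) ^ 2) + (α (j₁ a)) ^ 2)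
        = 2 * eN (vstar a.1) := by
      intro a; rw [hα1 a]
      simp only [hu1 a]
      exact neuron_reg (vstar a.1) a.2
    have e2 : ∀ b : {i // wstar i ≠ 0}, ((∑ h, (u (j₂ b) h) ^ 2) + (α (j₂ b)) ^ 2)
        = 2 * eN (wstar b.1) := by
      intro b; rw [hα2 b, neg_sq]
      simp only [hu2 b]
      exact neuron_reg (wstar b.1) b.2
    simp only [e1, e2]
    rw [← Finset.mul_sum, ← Finset.mul_sum, ← mul_add]
    congr 1
    rw [Finset.sum_add_distrib]
    congr 1
    · exact sum_subtype_eq (fun i => vstar i ≠ 0) (fun i => eN (vstar i))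
        (fun i hi => by
          have hi' : vstar i = 0 := not_not.mp hi
          simp [hi', eN_zero])
    · exact sum_subtype_eq (fun i => wstar i ≠ 0) (fun i => eN (wstar i))
        (fun i hi => by
          have hi' : wstar i = 0 := not_not.mp hi
          simp [hi', eN_zero])
  -- STEP B : build a feasible point of the convex program from (u', α')
  set I : Fin m → Fin P := fun j => (hDall (u' j)).choose with hIdef
  have hIspec : ∀ j, D (I j)
      = Matrix.diagonal (fun k => if 0 ≤ (X *ᵥ u' j) k then (1:ℝ) else 0) :=
    fun j => (hDall (u' j)).choose_spec
  set v : Fin P → Fin d → ℝ :=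
    fun i => ∑ j ∈ Finset.univ.filter (fun j => I j = i ∧ 0 ≤ α' j), α' j • u' j with hvdef
  set w : Fin P → Fin d → ℝ :=
    fun i => ∑ j ∈ Finset.univ.filter (fun j => I j = i ∧ ¬ 0 ≤ α' j), (-α' j) • u' j with hwdef
  have hfeasu : ∀ j k, 0 ≤ (((2:ℝ) • D (I j) - 1) *ᵥ (X *ᵥ u' j)) k := by
    intro j k
    rw [hIspec j, Matrix.sub_mulVec, Matrix.smul_mulVec, Matrix.one_mulVec]
    simp only [Pi.sub_apply, Pi.smul_apply, Matrix.mulVec_diagonal, smul_eq_mul]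
    by_cases h : 0 ≤ (X *ᵥ u' j) k
    · rw [if_pos h]; ring_nf; linarith
    · rw [if_neg h]; push_neg at h; ring_nf; linarith
  have hDu : ∀ j k, (D (I j) *ᵥ (X *ᵥ u' j)) k = max ((X *ᵥ u' j) k) 0 := by
    intro j k; rw [hIspec j]; exact ind_mulVec _ k
  have hfeasv : ∀ i, ∀ k, 0 ≤ (((2:ℝ) • D i - 1) *ᵥ (X *ᵥ v i)) k := by
    intro i k
    rw [hvdef]
    rw [mulVec_finsum, mulVec_finsum, Finset.sum_apply]
    apply Finset.sum_nonneg
    intro j hj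
    simp only [Finset.mem_filter, Finset.mem_univ, true_and] at hj
    rw [Matrix.mulVec_smul, Matrix.mulVec_smul, Pi.smul_apply, smul_eq_mul]
    exact mul_nonneg hj.2 (hj.1 ▸ hfeasu j k)
  have hfeasw : ∀ i, ∀ k, 0 ≤ (((2:ℝ) • D i - 1) *ᵥ (X *ᵥ w i)) k := by
    intro i k
    rw [hwdef]
    rw [mulVec_finsum, mulVec_finsum, Finset.sum_apply]
    apply Finset.sum_nonneg
    intro j hj
    simp only [Finset.mem_filter, Finset.mem_univ, true_and] at hj
    rw [Matrix.mulVec_smul, Matrix.mulVec_smul, Pi.smul_apply, smul_eq_mul]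
    exact mul_nonneg (by linarith [le_of_not_ge hj.2]) (hj.1 ▸ hfeasu j k)
  have merge : ∀ (i : Fin P) (g : Fin m → ℝ),
      (∑ j ∈ Finset.univ.filter (fun j => I j = i ∧ 0 ≤ α' j), g j)
      + (∑ j ∈ Finset.univ.filter (fun j => I j = i ∧ ¬ 0 ≤ α' j), g j)
      = ∑ j ∈ Finset.univ.filter (fun j => I j = i), g j := by
    intro i g
    rw [show Finset.univ.filter (fun j => I j = i ∧ 0 ≤ α' j)
        = (Finset.univ.filter (fun j => I j = i)).filter (fun j => 0 ≤ α' j) from by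
        ext j; simp [and_assoc],
      show Finset.univ.filter (fun j => I j = i ∧ ¬ 0 ≤ α' j)
        = (Finset.univ.filter (fun j => I j = i)).filter (fun j => ¬ 0 ≤ α' j) from by
        ext j; simp [and_assoc]]
    exact Finset.sum_filter_add_sum_filter_not _ _ _
  have predB : (∑ i, D i *ᵥ (X *ᵥ (v i - w i)))
      = (fun k => ∑ j, max ((X *ᵥ u' j) k) 0 * α' j) := by
    funext k
    rw [Finset.sum_apply]
    have hterm : ∀ i, (D i *ᵥ (X *ᵥ (v i - w i))) k
        = ∑ j ∈ Finset.univ.filter (fun j => I j = i),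
            max ((X *ᵥ u' j) k) 0 * α' j := by
      intro i
      rw [Matrix.mulVec_sub, Matrix.mulVec_sub, Pi.sub_apply]
      have hv' : (D i *ᵥ (X *ᵥ v i)) k
          = ∑ j ∈ Finset.univ.filter (fun j => I j = i ∧ 0 ≤ α' j),
              max ((X *ᵥ u' j) k) 0 * α' j := by
        rw [hvdef, mulVec_finsum, mulVec_finsum, Finset.sum_apply]
        apply Finset.sum_congr rfl
        intro j hj
        simp only [Finset.mem_filter, Finset.mem_univ, true_and] at hj
        rw [Matrix.mulVec_smul, Matrix.mulVec_smul, Pi.smul_apply, smul_eq_mul,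
          ← hj.1, hDu j k, mul_comm]
      have hw' : (D i *ᵥ (X *ᵥ w i)) k
          = -∑ j ∈ Finset.univ.filter (fun j => I j = i ∧ ¬ 0 ≤ α' j),
              max ((X *ᵥ u' j) k) 0 * α' j := by
        rw [hwdef, mulVec_finsum, mulVec_finsum, Finset.sum_apply, ← Finset.sum_neg_distrib]
        apply Finset.sum_congr rfl
        intro j hj
        simp only [Finset.mem_filter, Finset.mem_univ, true_and] at hj
        rw [Matrix.mulVec_smul, Matrix.mulVec_smul, Pi.smul_apply, smul_eq_mul,
          ← hj.1, hDu j k]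
        ring
      rw [hv', hw', sub_neg_eq_add, merge]
    simp only [hterm]
    exact Finset.sum_fiberwise _ _ _
  have regB : 2 * (∑ i, (eN (v i) + eN (w i)))
      ≤ ∑ j, ((∑ h, (u' j h) ^ 2) + (α' j) ^ 2) := by
    have h1 : ∑ i, (eN (v i) + eN (w i)) ≤ ∑ j, |α' j| * eN (u' j) := by
      calc ∑ i, (eN (v i) + eN (w i))
          ≤ ∑ i, ((∑ j ∈ Finset.univ.filter (fun j => I j = i ∧ 0 ≤ α' j),
              |α' j| * eN (u' j))
            + (∑ j ∈ Finset.univ.filter (fun j => I j = i ∧ ¬ 0 ≤ α' j),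
              |α' j| * eN (u' j))) := by
            apply Finset.sum_le_sum
            intro i _
            apply add_le_add
            · have hvi : v i
                  = ∑ j ∈ Finset.univ.filter (fun j => I j = i ∧ 0 ≤ α' j), α' j • u' j := rfl
              rw [hvi]
              refine le_trans (eN_sum_le _ _) (Finset.sum_le_sum fun j _ => ?_)
              exact le_of_eq (eN_smul _ _)
            · have hwi : w i
                  = ∑ j ∈ Finset.univ.filter (fun j => I j = i ∧ ¬ 0 ≤ α' j),
                      (-α' j) • u' j := rfl
              rw [hwi]
              refine le_trans (eN_sum_le _ _) (Finset.sum_le_sum fun j _ => ?_)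
              exact le_of_eq (by rw [eN_smul, abs_neg])
        _ = ∑ i, ∑ j ∈ Finset.univ.filter (fun j => I j = i), |α' j| * eN (u' j) := by
            apply Finset.sum_congr rfl
            intro i _
            exact merge i _
        _ = ∑ j, |α' j| * eN (u' j) := Finset.sum_fiberwise _ _ _
    have h2 : ∀ j, 2 * (|α' j| * eN (u' j)) ≤ (∑ h, (u' j h) ^ 2) + (α' j) ^ 2 := by
      intro j
      have := two_mul_le_add_sq (eN (u' j)) |α' j|
      rw [eN_sq, sq_abs] at this
      linarith [this]
    calc 2 * (∑ i, (eN (v i) + eN (w i))) ≤ 2 * ∑ j, |α' j| * eN (u' j) := by linarith [h1]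
      _ = ∑ j, 2 * (|α' j| * eN (u' j)) := by rw [Finset.mul_sum]
      _ ≤ ∑ j, ((∑ h, (u' j h) ^ 2) + (α' j) ^ 2) := Finset.sum_le_sum fun j _ => h2 j
  -- Assemble
  have hchain := hopt v w hfeasv hfeasw
  simp only [show ∀ z : Fin P → Fin d → ℝ, ∀ i, Real.sqrt (∑ h, (z i h) ^ 2) = eN (z i)
    from fun z i => rfl] at hchain
  calc ℓ (fun k => ∑ j, max ((X *ᵥ u j) k) 0 * α j)
        + β / 2 * ∑ j, ((∑ h, (u j h) ^ 2) + (α j) ^ 2)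
      = ℓ (∑ i, D i *ᵥ (X *ᵥ (vstar i - wstar i)))
        + β * ∑ i, (eN (vstar i) + eN (wstar i)) := by rw [predA, regA]; ring
    _ ≤ ℓ (∑ i, D i *ᵥ (X *ᵥ (v i - w i)))
        + β * ∑ i, (eN (v i) + eN (w i)) := hchain
    _ ≤ ℓ (fun k => ∑ j, max ((X *ᵥ u' j) k) 0 * α' j)
        + β / 2 * ∑ j, ((∑ h, (u' j h) ^ 2) + (α' j) ^ 2) := by
        rw [predB]
        have hb2 : (0:ℝ) ≤ β / 2 := by positivity
        have := mul_le_mul_of_nonneg_left regB hb2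
        linarith [this]
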